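/- (Generalized Fermat's little theorem.) Let n ≥ 1, a ∈ ℤⁿ, p a prime, and v ≥ 1. Then p^v divides the integer (−1)^{p^v}·s_{p^v}(a) − (−1)^{p^{v−1}}·s_{p^{v−1}}(a). -/

import Mathlib

set_option synthInstance.maxHeartbeats 1000000
set_option maxHeartbeats 1000000
set_option linter.unusedVariables false


open Polynomial

/-- The sum of `j`-th powers of the roots (with multiplicity, in `ℂ`) of
`Xⁿ − a₁Xⁿ⁻¹ + a₂Xⁿ⁻² − ⋯ + (−1)ⁿaₙ`. -/
noncomputable def rootPowerSum (n : ℕ) (a : Fin n → ℤ) (j : ℕ) : ℂ :=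
  ((Polynomial.roots
      (X ^ n + ∑ i : Fin n, C ((-1 : ℂ) ^ ((i : ℕ) + 1) * (a i : ℂ)) * X ^ (n - ((i : ℕ) + 1)))).map
    (fun θ => θ ^ j)).sum

/-- `F(m,a) = Σ_{j ∣ m} (−1)ʲ (sⱼ/j) Π_{p ∣ m/j} (1 − 1/p)`, where `s j` is the `j`-th
power sum of the roots (given here as an abstract integer-valued function). -/
noncomputable def Fval (s : ℕ → ℤ) (m : ℕ) : ℚ :=
  ∑ j ∈ m.divisors,
    (-1 : ℚ) ^ j * (s j : ℚ) / (j : ℚ) *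
      ∏ p ∈ (m / j).primeFactors, (1 - 1 / (p : ℚ))


section setup
variable (n : ℕ) (a : Fin n → ℤ)

noncomputable def fZ : ℤ[X] :=
  X ^ n + ∑ i : Fin n, C ((-1 : ℤ) ^ ((i : ℕ) + 1) * (a i)) * X ^ (n - ((i : ℕ) + 1))

lemma fZ_monic (hn : 1 ≤ n) : (fZ n a).Monic := by
  unfold fZ
  apply Polynomial.monic_X_pow_add
  refine lt_of_le_of_lt ((Polynomial.degree_sum_le _ _).trans ?_)
    (?_ : ((n-1 : ℕ) : WithBot ℕ) < (n : WithBot ℕ))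
  · apply Finset.sup_le
    intro i _
    refine (Polynomial.degree_mul_le _ _).trans ?_
    rw [Polynomial.degree_X_pow]
    refine (add_le_add (Polynomial.degree_C_le) le_rfl).trans ?_
    rw [zero_add]
    exact_mod_cast Nat.cast_le.mpr (by omega : n - ((i:ℕ)+1) ≤ n - 1)
  · exact_mod_cast Nat.cast_lt.mpr (Nat.sub_lt hn one_pos)

lemma fZ_map_C (R : Type*) [CommRing R] :
    (fZ n a).map (Int.castRingHom R) =
      X ^ n + ∑ i : Fin n, C ((-1 : R) ^ ((i : ℕ) + 1) * (a i : R)) * X ^ (n - ((i : ℕ) + 1)) := by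
  unfold fZ
  push_cast [Polynomial.map_add, Polynomial.map_pow, Polynomial.map_X, Polynomial.map_sum,
    Polynomial.map_mul, Polynomial.map_C]
  norm_num

end setup

section main
variable (n : ℕ) (hn : 1 ≤ n) (a : Fin n → ℤ)

noncomputable def Kf : Type := ((fZ n a).map (Int.castRingHom ℚ)).SplittingField

noncomputable instance : Field (Kf n a) := inferInstanceAs (Field (((fZ n a).map (Int.castRingHom ℚ)).SplittingField))
noncomputable instance : Algebra ℚ (Kf n a) := inferInstanceAs (Algebra ℚ (((fZ n a).map (Int.castRingHom ℚ)).SplittingField))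
instance : FiniteDimensional ℚ (Kf n a) := inferInstanceAs (FiniteDimensional ℚ (((fZ n a).map (Int.castRingHom ℚ)).SplittingField))
instance : IsGalois ℚ (Kf n a) := by
  haveI : Normal ℚ (Kf n a) := Polynomial.SplittingField.instNormal ((fZ n a).map (Int.castRingHom ℚ))
  exact IsGalois.mk

noncomputable def fK : (Kf n a)[X] := (fZ n a).map (Int.castRingHom (Kf n a))

lemma fK_splits : ((fK n a)).Splits := by
  have h : (Int.castRingHom (Kf n a)) =
      (algebraMap ℚ (Kf n a)).comp (Int.castRingHom ℚ) := by
    apply RingHom.ext_int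
  unfold fK
  rw [h, ← Polynomial.map_map]
  exact Polynomial.SplittingField.splits ((fZ n a).map (Int.castRingHom ℚ))

end main

section main2
variable (n : ℕ) (a : Fin n → ℤ)

noncomputable def emb : Kf n a →ₐ[ℚ] ℂ :=
  IsAlgClosed.lift

lemma emb_comp_int :
    (emb n a).toRingHom.comp (Int.castRingHom (Kf n a)) = Int.castRingHom ℂ :=
  RingHom.ext_int _ _

lemma rootPowerSum_eq (j : ℕ) :
    rootPowerSum n a j = emb n a (((fK n a).roots.map (fun θ => θ ^ j)).sum) := by
  have h1 : (X ^ n + ∑ i : Fin n, C ((-1 : ℂ) ^ ((i : ℕ) + 1) * (a i : ℂ)) *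
      X ^ (n - ((i : ℕ) + 1))) = (fK n a).map (emb n a).toRingHom := by
    rw [fK, Polynomial.map_map, emb_comp_int, fZ_map_C]
  have h2 : ((fK n a).map (emb n a).toRingHom).roots =
      (fK n a).roots.map (emb n a).toRingHom := (fK_splits n a).roots_map _
  rw [rootPowerSum, h1, h2, Multiset.map_map, map_multiset_sum, Multiset.map_map]
  congr 1
  apply Multiset.map_congr rfl
  intro x _
  simp

lemma sval_eq (s : ℕ → ℤ) (hs : ∀ j, 1 ≤ j → (s j : ℂ) = rootPowerSum n a j)
    (j : ℕ) (hj : 1 ≤ j) :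
    ((s j : ℤ) : Kf n a) = (((fK n a).roots.map (fun θ => θ ^ j)).sum) := by
  apply RingHom.injective (emb n a).toRingHom
  show (emb n a) _ = (emb n a) _
  rw [map_intCast, hs j hj, rootPowerSum_eq]

lemma roots_integral (θ : Kf n a) (hθ : θ ∈ (fK n a).roots) : IsIntegral ℤ θ := by
  refine ⟨fZ n a, fZ_monic n a ?_, ?_⟩
  · by_contra h
    have hn : n = 0 := by omega
    subst hn
    have : fK 0 a = 1 := by
      unfold fK fZ
      simp
    rw [this] at hθ
    simp at hθ
  · have h2 : Polynomial.eval θ ((fZ n a).map (Int.castRingHom (Kf n a))) = 0 :=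
      Polynomial.isRoot_of_mem_roots hθ
    rw [Polynomial.eval_map] at h2
    rw [algebraMap_int_eq]
    exact h2

section main3
variable (n : ℕ) (a : Fin n → ℤ)

noncomputable def tR : Multiset (integralClosure ℤ (Kf n a)) :=
  (fK n a).roots.attach.map (fun θ => ⟨θ.1, roots_integral n a θ.1 θ.2⟩)

lemma tR_map :
    (tR n a).map (fun x : integralClosure ℤ (Kf n a) => x.1) = (fK n a).roots := by
  rw [tR, Multiset.map_map]
  exact Multiset.attach_map_val _

noncomputable def sigR (σ : Kf n a ≃ₐ[ℚ] Kf n a) :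
    integralClosure ℤ (Kf n a) →+* integralClosure ℤ (Kf n a) where
  toFun x := ⟨σ x.1, x.2.map ((σ.toAlgHom.restrictScalars ℤ))⟩
  map_one' := by ext; simp
  map_mul' x y := by ext; simp
  map_zero' := by ext; simp
  map_add' x y := by ext; simp

lemma roots_sig (σ : Kf n a ≃ₐ[ℚ] Kf n a) :
    (fK n a).roots.map (fun x => σ x) = (fK n a).roots := by
  have hmap : (fK n a).map (σ : Kf n a →+* Kf n a) = fK n a := by
    rw [fK, Polynomial.map_map]
    congr 1
    apply RingHom.ext_int
  have h := (fK_splits n a).roots_map (σ : Kf n a →+* Kf n a)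
  rw [hmap] at h
  exact h.symm

lemma tR_sig (σ : Kf n a ≃ₐ[ℚ] Kf n a) :
    (tR n a).map (sigR n a σ) = tR n a := by
  apply Multiset.map_injective (f := fun x : integralClosure ℤ (Kf n a) => x.1)
    Subtype.coe_injective
  rw [Multiset.map_map, tR_map]
  have h2 : ((fun x : integralClosure ℤ (Kf n a) => x.1) ∘ (sigR n a σ)) =
      (fun y => σ y) ∘ (fun x : integralClosure ℤ (Kf n a) => x.1) := rfl
  rw [h2, ← Multiset.map_map, tR_map, roots_sig]

end main3

section main4
variable (n : ℕ) (a : Fin n → ℤ) (p : ℕ) [Fact p.Prime]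

noncomputable def wv : WittVector p (integralClosure ℤ (Kf n a)) :=
  ((tR n a).map (WittVector.teichmuller p)).sum

lemma wv_fixed (σ : Kf n a ≃ₐ[ℚ] Kf n a) :
    WittVector.map (sigR n a σ) (wv n a p) = wv n a p := by
  rw [wv, map_multiset_sum, Multiset.map_map]
  have h : ((WittVector.map (sigR n a σ)) ∘ (WittVector.teichmuller p)) =
      (WittVector.teichmuller p : _ →* WittVector p (integralClosure ℤ (Kf n a))) ∘
        (sigR n a σ) := by
    funext x
    exact WittVector.map_teichmuller p _ _
  rw [h, ← Multiset.map_map, tR_sig]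

lemma wv_coeff_fixed (i : ℕ) (σ : Kf n a ≃ₐ[ℚ] Kf n a) :
    σ ((wv n a p).coeff i).1 = ((wv n a p).coeff i).1 := by
  conv_rhs => rw [← wv_fixed n a p σ]
  rw [WittVector.map_coeff]
  rfl

lemma wv_coeff_int (i : ℕ) : ∃ b : ℤ, ((wv n a p).coeff i).1 = (b : Kf n a) := by
  have hfix : ((wv n a p).coeff i).1 ∈
      IntermediateField.fixedField (⊤ : Subgroup (Kf n a ≃ₐ[ℚ] Kf n a)) :=
    fun g => wv_coeff_fixed n a p i g.1
  have hbot : IntermediateField.fixedField (⊤ : Subgroup (Kf n a ≃ₐ[ℚ] Kf n a)) = ⊥ :=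
    ((IsGalois.tfae).out 0 1).mp (inferInstance : IsGalois ℚ (Kf n a))
  rw [hbot, IntermediateField.mem_bot] at hfix
  obtain ⟨q, hq⟩ := hfix
  have hint : IsIntegral ℤ q := by
    rw [← isIntegral_algebraMap_iff (algebraMap ℚ (Kf n a)).injective, hq]
    exact ((wv n a p).coeff i).2
  obtain ⟨b, hb⟩ := IsIntegrallyClosed.isIntegral_iff.mp hint
  refine ⟨b, ?_⟩
  rw [← hq, ← hb]
  simp

lemma ghost_wv (m : ℕ) :
    (WittVector.ghostComponent m (wv n a p)).1 =
      ((fK n a).roots.map (fun θ => θ ^ p ^ m)).sum := by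
  rw [wv, map_multiset_sum, Multiset.map_map]
  have h : ((WittVector.ghostComponent m) ∘ (WittVector.teichmuller p)) =
      (fun r : integralClosure ℤ (Kf n a) => r ^ p ^ m) := by
    funext x
    exact WittVector.ghostComponent_teichmuller p x m
  rw [h, ← tR_map n a, Multiset.map_map]
  push_cast
  rw [Multiset.map_map]
  rfl

end main4

section final

lemma intFermat (p : ℕ) (hp : p.Prime) (b : ℤ) (m : ℕ) :
    (p : ℤ) ^ m ∣ b ^ p ^ m - b ^ p ^ (m - 1) := by
  rcases Nat.eq_zero_or_pos m with rfl | hm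
  · simp
  · obtain ⟨k, rfl⟩ := Nat.exists_eq_add_of_le hm
    have h1 : (p : ℤ) ∣ b ^ p - b := by
      haveI := Fact.mk hp
      have : ((b ^ p - b : ℤ) : ZMod p) = 0 := by
        push_cast
        rw [ZMod.pow_card]
        ring
      exact_mod_cast (ZMod.intCast_zmod_eq_zero_iff_dvd _ p).mp this
    have h2 := dvd_sub_pow_of_dvd_sub h1 k
    rw [← pow_mul, ← pow_succ'] at h2
    rw [add_comm] at h2
    simpa [Nat.add_sub_cancel, mul_comm] using h2

lemma sval_ghost (n : ℕ) (hn : 1 ≤ n) (a : Fin n → ℤ) (s : ℕ → ℤ)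
    (hs : ∀ j, 1 ≤ j → (s j : ℂ) = rootPowerSum n a j)
    (p : ℕ) [Fact p.Prime] (b : ℕ → ℤ)
    (hb : ∀ i, ((wv n a p).coeff i).1 = ((b i : ℤ) : Kf n a)) (m : ℕ) :
    s (p ^ m) = ∑ i ∈ Finset.range (m + 1), (p : ℤ) ^ i * (b i) ^ p ^ (m - i) := by
  haveI : CharZero (Kf n a) :=
    charZero_of_injective_algebraMap (algebraMap ℚ (Kf n a)).injective
  have hp1 : 1 ≤ p ^ m := Nat.one_le_pow _ _ (Fact.out : p.Prime).pos
  apply Int.cast_injective (α := Kf n a)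
  rw [sval_eq n a s hs _ hp1, ← ghost_wv n a p m, WittVector.ghostComponent_apply,
    aeval_wittPolynomial]
  push_cast
  apply Finset.sum_congr rfl
  intro i _
  rw [hb i]


/-- Generalized Fermat's little theorem. -/
theorem generalized_fermat_little (n : ℕ) (hn : 1 ≤ n) (a : Fin n → ℤ) (s : ℕ → ℤ)
    (hs : ∀ j, 1 ≤ j → (s j : ℂ) = rootPowerSum n a j)
    (p : ℕ) (hp : p.Prime) (v : ℕ) (hv : 1 ≤ v) :
    (p : ℤ) ^ v ∣ ((-1) ^ (p ^ v) * s (p ^ v) - (-1) ^ (p ^ (v - 1)) * s (p ^ (v - 1))) := by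
  haveI := Fact.mk hp
  choose b hb using wv_coeff_int n a p
  have key := sval_ghost n hn a s hs p b hb
  have hmain : (p : ℤ) ^ v ∣ s (p ^ v) - s (p ^ (v - 1)) := by
    obtain ⟨u, rfl⟩ : ∃ u, v = u + 1 := ⟨v - 1, by omega⟩
    simp only [Nat.add_sub_cancel]
    rw [key (u + 1), key u, Finset.sum_range_succ (n := u + 1)]
    have h1 : ∀ i ∈ Finset.range (u + 1),
        (p : ℤ) ^ (u + 1) ∣ ((p : ℤ) ^ i * b i ^ p ^ (u + 1 - i) - (p : ℤ) ^ i * b i ^ p ^ (u - i)) := by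
      intro i hi
      rw [Finset.mem_range] at hi
      rw [← mul_sub]
      have h2 := intFermat p hp (b i) (u + 1 - i)
      have h3 : u + 1 - i - 1 = u - i := by omega
      rw [h3] at h2
      calc (p : ℤ) ^ (u + 1) = (p : ℤ) ^ i * (p : ℤ) ^ (u + 1 - i) := by
            rw [← pow_add]; congr 1; omega
        _ ∣ (p : ℤ) ^ i * (b i ^ p ^ (u + 1 - i) - b i ^ p ^ (u - i)) :=
            mul_dvd_mul_left _ h2
    have h4 : ∑ i ∈ Finset.range (u + 1), (p : ℤ) ^ i * b i ^ p ^ (u + 1 - i) +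
          (p : ℤ) ^ (u + 1) * b (u + 1) ^ p ^ (u + 1 - (u + 1)) -
          ∑ i ∈ Finset.range (u + 1), (p : ℤ) ^ i * b i ^ p ^ (u - i) =
        (∑ i ∈ Finset.range (u + 1),
          ((p : ℤ) ^ i * b i ^ p ^ (u + 1 - i) - (p : ℤ) ^ i * b i ^ p ^ (u - i))) +
          (p : ℤ) ^ (u + 1) * b (u + 1) ^ p ^ (u + 1 - (u + 1)) := by
      rw [Finset.sum_sub_distrib]
      ring
    rw [h4]
    exact dvd_add (Finset.dvd_sum h1) (Dvd.intro _ rfl)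
  have hsign : (p : ℤ) ^ v ∣ ((-1 : ℤ) ^ (p ^ v) - (-1 : ℤ) ^ (p ^ (v - 1))) := by
    rcases hp.eq_two_or_odd' with h2 | hodd
    · subst h2
      rcases Nat.lt_or_ge v 2 with h1 | h1
      · have hv1 : v = 1 := by omega
        subst hv1
        norm_num
      · have he1 : Even (2 ^ v) := Nat.even_pow.mpr ⟨even_two, by omega⟩
        have he2 : Even (2 ^ (v - 1)) := Nat.even_pow.mpr ⟨even_two, by omega⟩
        rw [he1.neg_one_pow, he2.neg_one_pow]
        simp
    · have ho1 : Odd (p ^ v) := hodd.pow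
      have ho2 : Odd (p ^ (v - 1)) := hodd.pow
      rw [ho1.neg_one_pow, ho2.neg_one_pow]
      simp
  have expand : ((-1 : ℤ) ^ (p ^ v) * s (p ^ v) - (-1) ^ (p ^ (v - 1)) * s (p ^ (v - 1))) =
      (-1 : ℤ) ^ (p ^ v) * (s (p ^ v) - s (p ^ (v - 1))) +
        ((-1 : ℤ) ^ (p ^ v) - (-1) ^ (p ^ (v - 1))) * s (p ^ (v - 1)) := by ring
  rw [expand]
  exact dvd_add (Dvd.dvd.mul_left hmain _) (Dvd.dvd.mul_right hsign _)


end final
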